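/- Let gamma_1, ..., gamma_n be independent Bernoulli(pi) random variables, and let M be an n x n real matrix with entries m_{ij} and spectral norm ||M||_2. Fix a subset Lambda of [n]. Then for any 0 < s < 1/(2*||M||_2^2), E[exp(s * sum_{i in Lambda} sum_{j not in Lambda} gamma_j * m_{ij}^2)] <= exp(2 * s * pi * sum_{i != j} m_{ij}^2). -/

import Mathlib

open MeasureTheory ProbabilityTheory

lemma col_bound' {n : ℕ} (M : Matrix (Fin n) (Fin n) ℝ) (j : Fin n) :
    ∑ i, M i j ^ 2 ≤ ‖Matrix.toEuclideanCLM (𝕜 := ℝ) M‖ ^ 2 := by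
  set x : EuclideanSpace ℝ (Fin n) := EuclideanSpace.single j 1 with hx
  have hxnorm : ‖x‖ = 1 := by simp [hx]
  have happ : ∀ i, (Matrix.toEuclideanCLM (𝕜 := ℝ) M x) i = M i j := by
    intro i
    have : x = WithLp.toLp 2 (Pi.single j 1) := rfl
    rw [this, Matrix.toEuclideanCLM_toLp]
    simp [Matrix.toLin'_apply, Matrix.mulVec_single]
  have hle : ‖Matrix.toEuclideanCLM (𝕜 := ℝ) M x‖ ≤ ‖Matrix.toEuclideanCLM (𝕜 := ℝ) M‖ := by
    calc ‖Matrix.toEuclideanCLM (𝕜 := ℝ) M x‖ ≤ ‖Matrix.toEuclideanCLM (𝕜 := ℝ) M‖ * ‖x‖ :=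
      (Matrix.toEuclideanCLM (𝕜 := ℝ) M).le_opNorm x
    _ = _ := by rw [hxnorm, mul_one]
  have hsq : ‖Matrix.toEuclideanCLM (𝕜 := ℝ) M x‖ ^ 2 = ∑ i, M i j ^ 2 := by
    rw [EuclideanSpace.norm_eq, Real.sq_sqrt (by positivity)]
    exact Finset.sum_congr rfl fun i _ => by rw [happ i, Real.norm_eq_abs, sq_abs]
  calc ∑ i, M i j ^ 2 = ‖Matrix.toEuclideanCLM (𝕜 := ℝ) M x‖ ^ 2 := hsq.symm
  _ ≤ _ := pow_le_pow_left₀ (norm_nonneg _) hle 2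

lemma exp_le_one_add_two_mul' {x : ℝ} (hx0 : 0 ≤ x) (hx : x ≤ 1/2) :
    Real.exp x ≤ 1 + 2*x := by
  have h1 : 1 - x ≤ Real.exp (-x) := by have := Real.add_one_le_exp (-x); linarith
  have h2 : Real.exp x * Real.exp (-x) = 1 := by rw [← Real.exp_add]; simp
  have h3 : 0 < 1 - x := by linarith
  have h4 : Real.exp x ≤ 1/(1-x) := by
    rw [le_div_iff₀ h3]
    calc Real.exp x * (1-x) ≤ Real.exp x * Real.exp (-x) :=
      mul_le_mul_of_nonneg_left h1 (Real.exp_pos x).le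
    _ = 1 := h2
  refine h4.trans ?_
  rw [div_le_iff₀ h3]; nlinarith

set_option maxHeartbeats 1000000 in
/-- MGF bound for a Bernoulli-masked sum of squared matrix entries. -/
theorem bernoulli_mask_mgf_bound {Ω : Type*} [MeasurableSpace Ω]
    (μ : Measure Ω) [IsProbabilityMeasure μ]
    (n : ℕ) (γ : Fin n → Ω → ℝ) (π : ℝ) (hπ0 : 0 ≤ π) (hπ1 : π ≤ 1)
    (hmeas : ∀ j, Measurable (γ j))
    (h01 : ∀ j ω, γ j ω = 0 ∨ γ j ω = 1)
    (hber : ∀ j, μ {ω | γ j ω = 1} = ENNReal.ofReal π)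
    (hindep : iIndepFun γ μ)
    (M : Matrix (Fin n) (Fin n) ℝ) (Λ : Finset (Fin n))
    (s : ℝ) (hs0 : 0 < s)
    (hs : s < 1 / (2 * ‖Matrix.toEuclideanCLM (𝕜 := ℝ) M‖ ^ 2)) :
    ∫ ω, Real.exp (s * ∑ i ∈ Λ, ∑ j ∈ Λᶜ, γ j ω * M i j ^ 2) ∂μ
      ≤ Real.exp (2 * s * π * ∑ i, ∑ j ∈ ({i}ᶜ : Finset (Fin n)), M i j ^ 2) := by
  classical
  set K := ‖Matrix.toEuclideanCLM (𝕜 := ℝ) M‖ with hK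
  -- s * K^2 < 1/2
  have hK2 : 0 < 2 * K ^ 2 := by
    rcases eq_or_lt_of_le (by positivity : (0:ℝ) ≤ 2 * K ^ 2) with h | h
    · exfalso; rw [← h, div_zero] at hs; linarith
    · exact h
  have hsK : s * K ^ 2 < 1/2 := by
    have := (lt_div_iff₀ hK2).mp hs
    nlinarith
  -- the column sums
  set a : Fin n → ℝ := fun j => ∑ i ∈ Λ, M i j ^ 2 with ha
  have ha0 : ∀ j, 0 ≤ a j := fun j => Finset.sum_nonneg fun i _ => sq_nonneg _
  have haK : ∀ j, a j ≤ K ^ 2 := by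
    intro j
    refine le_trans ?_ (col_bound' M j)
    exact Finset.sum_le_sum_of_subset_of_nonneg (Finset.subset_univ Λ)
      (fun i _ _ => sq_nonneg _)
  have hsa : ∀ j, s * a j ≤ 1/2 := fun j =>
    le_trans (by nlinarith [ha0 j, haK j] : s * a j ≤ s * K ^ 2) hsK.le
  -- the independent summands
  set X : Fin n → Ω → ℝ := fun j => (fun x => x * a j) ∘ γ j with hX
  have hXmeas : ∀ j, Measurable (X j) := fun j => (hmeas j).mul_const _
  have hXindep : iIndepFun X μ :=
    hindep.comp _ (fun j => measurable_id.mul_const (a j))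
  -- rewrite LHS as mgf of the sum
  have hLHS : (∫ ω, Real.exp (s * ∑ i ∈ Λ, ∑ j ∈ Λᶜ, γ j ω * M i j ^ 2) ∂μ)
      = mgf (∑ j ∈ Λᶜ, X j) μ s := by
    have hpt : ∀ ω, ∑ i ∈ Λ, ∑ j ∈ Λᶜ, γ j ω * M i j ^ 2 = (∑ j ∈ Λᶜ, X j) ω := by
      intro ω
      rw [Finset.sum_apply, Finset.sum_comm]
      refine Finset.sum_congr rfl fun j _ => ?_
      simp only [hX, Function.comp_apply, ha]
      rw [Finset.mul_sum]
    simp_rw [hpt]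
    rfl
  rw [hLHS, hXindep.mgf_sum hXmeas]
  -- compute each mgf
  have hγint : ∀ j, Integrable (γ j) μ := by
    intro j
    have hA : MeasurableSet {ω | γ j ω = 1} := (hmeas j) (measurableSet_singleton 1)
    have hind : γ j = Set.indicator {ω | γ j ω = 1} (fun _ => (1:ℝ)) := by
      funext ω
      rcases h01 j ω with h | h <;> simp [Set.indicator, h]
    rw [hind]
    exact (integrable_const (1:ℝ)).indicator hA
  have hγint' : ∀ j, ∫ ω, γ j ω ∂μ = π := by
    intro j
    have hA : MeasurableSet {ω | γ j ω = 1} := (hmeas j) (measurableSet_singleton 1)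
    have hind : γ j = Set.indicator {ω | γ j ω = 1} (fun _ => (1:ℝ)) := by
      funext ω
      rcases h01 j ω with h | h <;> simp [Set.indicator, h]
    rw [hind, integral_indicator_const _ hA, measureReal_def, hber j, smul_eq_mul, mul_one,
      ENNReal.toReal_ofReal hπ0]
  have hmgf : ∀ j, mgf (X j) μ s = 1 + (Real.exp (s * a j) - 1) * π := by
    intro j
    rw [mgf]
    have heq : (fun ω => Real.exp (s * X j ω))
        = fun ω => 1 + (Real.exp (s * a j) - 1) * γ j ω := by
      funext ω
      rcases h01 j ω with h | h <;> simp [hX, h]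
    rw [heq, integral_add (integrable_const 1) ((hγint j).const_mul _),
      integral_const, integral_const_mul, hγint' j]
    simp
  -- bound each factor
  have hfac : ∀ j ∈ (Λᶜ : Finset (Fin n)), mgf (X j) μ s ≤ Real.exp (2 * s * π * a j) := by
    intro j _
    rw [hmgf j]
    have h1 : Real.exp (s * a j) ≤ 1 + 2 * (s * a j) :=
      exp_le_one_add_two_mul' (by positivity) (hsa j)
    have h2 : 1 + (Real.exp (s * a j) - 1) * π ≤ 1 + 2 * s * π * a j := by nlinarith
    refine h2.trans ?_
    have := Real.add_one_le_exp (2 * s * π * a j)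
    linarith
  have hfac0 : ∀ j ∈ (Λᶜ : Finset (Fin n)), 0 ≤ mgf (X j) μ s := by
    intro j _
    rw [hmgf j]
    have : 1 ≤ Real.exp (s * a j) := Real.one_le_exp (by positivity)
    nlinarith
  refine le_trans (Finset.prod_le_prod hfac0 hfac) ?_
  rw [← Real.exp_sum]
  rw [Real.exp_le_exp]
  rw [← Finset.mul_sum]
  have hsum : ∑ j ∈ Λᶜ, a j ≤ ∑ i, ∑ j ∈ ({i}ᶜ : Finset (Fin n)), M i j ^ 2 := by
    rw [ha]
    rw [Finset.sum_comm]
    refine le_trans (Finset.sum_le_sum fun i hi => ?_)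
      (Finset.sum_le_sum_of_subset_of_nonneg (Finset.subset_univ Λ)
        (fun i _ _ => Finset.sum_nonneg fun j _ => sq_nonneg _))
    refine Finset.sum_le_sum_of_subset_of_nonneg ?_ (fun j _ _ => sq_nonneg _)
    intro j hj
    simp only [Finset.mem_compl, Finset.mem_singleton] at *
    intro hji; exact hj (hji ▸ hi)
  have h2sπ : 0 ≤ 2 * s * π := by positivity
  exact mul_le_mul_of_nonneg_left hsum h2sπ
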